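/- The equation exp(z) = z has a solution in the open strip {z : 0 < Im z < π}, and Rouché's theorem / the argument principle implies exp(z) - z has exactly one zero in the rectangle [0,1] × [1, 3/2] (real part in [0,1], imaginary part in [1, 3/2]). -/

import Mathlib

open Complex

private lemma abs_le_of_sq {w : ℂ} {b : ℝ} (hb : 0 ≤ b)
    (h : w.re ^ 2 + w.im ^ 2 ≤ b ^ 2) : ‖w‖ ≤ b := by
  rw [Complex.norm_def, Complex.normSq_apply]
  calc Real.sqrt (w.re * w.re + w.im * w.im) ≤ Real.sqrt (b ^ 2) :=
        Real.sqrt_le_sqrt (by nlinarith)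
    _ = b := Real.sqrt_sq hb

/-- Lipschitz estimate for `Complex.log` on a convex set in the upper half plane. -/
private lemma log_lip {c : ℝ} (hc : 0 < c) {s : Set ℂ} (hconv : Convex ℝ s)
    (hs : ∀ ζ ∈ s, c ≤ ζ.im) {z w : ℂ} (hz : z ∈ s) (hw : w ∈ s) :
    ‖Complex.log z - Complex.log w‖ ≤ c⁻¹ * ‖z - w‖ := by
  have hd : ∀ x ∈ s, HasFDerivWithinAt Complex.log
      ((ContinuousLinearMap.smulRight (1 : ℂ →L[ℂ] ℂ) x⁻¹).restrictScalars ℝ) s x := by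
    intro x hx
    have him : c ≤ x.im := hs x hx
    have hsl : x ∈ Complex.slitPlane := Or.inr (lt_of_lt_of_le hc him).ne'
    exact ((Complex.hasDerivAt_log hsl).hasFDerivAt.restrictScalars ℝ).hasFDerivWithinAt
  have hb : ∀ x ∈ s,
      ‖(ContinuousLinearMap.smulRight (1 : ℂ →L[ℂ] ℂ) x⁻¹).restrictScalars ℝ‖ ≤ c⁻¹ := by
    intro x hx
    rw [ContinuousLinearMap.norm_restrictScalars, ContinuousLinearMap.norm_smulRight_apply,
      norm_one, one_mul, norm_inv]
    have h1 : c ≤ ‖x‖ := by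
      calc c ≤ x.im := hs x hx
        _ ≤ |x.im| := le_abs_self _
        _ ≤ ‖x‖ := Complex.abs_im_le_norm x
    exact inv_anti₀ hc h1
  exact hconv.norm_image_sub_le_of_norm_hasFDerivWithin_le hd hb hw hz

/-- Taylor approximation of `exp ((1+4i)/6)`. -/
private lemma expv_approx :
    ‖Complex.exp ((1 + 4 * Complex.I) / 6) -
      ((62874298321/67722117120 : ℂ) + (515335441/705438720) * Complex.I)‖ ≤ 11 / 10 ^ 8 := by
  have hsum : (∑ m ∈ Finset.range 9, ((1 + 4 * Complex.I) / 6) ^ m / m.factorial) =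
      (62874298321/67722117120 : ℂ) + (515335441/705438720) * Complex.I := by
    simp only [Finset.sum_range_succ, Finset.sum_range_zero]
    norm_num [Complex.ext_iff, pow_succ, Nat.factorial]
  have hv : ‖(1 + 4 * Complex.I) / 6‖ ≤ 688 / 1000 := by
    apply abs_le_of_sq (by norm_num)
    norm_num [Complex.ext_iff, Complex.div_re, Complex.div_im, Complex.normSq_apply]
  have h := Complex.exp_bound (x := (1 + 4 * Complex.I) / 6) (hv.trans (by norm_num))
    (n := 9) (by norm_num)
  rw [hsum] at h
  refine h.trans ?_
  have h9 : ‖(1 + 4 * Complex.I) / 6‖ ^ 9 ≤ (688 / 1000) ^ 9 :=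
    pow_le_pow_left₀ (norm_nonneg _) hv 9
  calc ‖(1 + 4 * Complex.I) / 6‖ ^ 9 * ((9 : ℕ).succ * (((9 : ℕ).factorial * 9 : ℝ))⁻¹)
      ≤ (688 / 1000) ^ 9 * ((9 : ℕ).succ * (((9 : ℕ).factorial * 9 : ℝ))⁻¹) := by
        apply mul_le_mul_of_nonneg_right h9
        positivity
    _ ≤ 11 / 10 ^ 8 := by norm_num [Nat.factorial]

/-- Approximation of `exp ((1+4i)/3)`. -/
private lemma expu_approx :
    ‖Complex.exp ((1 + 4 * Complex.I) / 3) -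
      ((301135717076795912429/917257029442999418880 : ℂ) +
        (32401354252818094561/23886901808411443200) * Complex.I)‖ ≤ 1 / 10 ^ 6 := by
  set qA : ℂ := (62874298321/67722117120 : ℂ) + (515335441/705438720) * Complex.I with hqA
  set v : ℂ := (1 + 4 * Complex.I) / 6 with hv
  have hsplit : (1 + 4 * Complex.I) / 3 = v + v := by rw [hv]; ring
  have hqB : ((301135717076795912429/917257029442999418880 : ℂ) +
      (32401354252818094561/23886901808411443200) * Complex.I) = qA * qA := by
    rw [hqA]
    norm_num [Complex.ext_iff]
  rw [hsplit, Complex.exp_add, hqB]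
  have hfac : Complex.exp v * Complex.exp v - qA * qA
      = (Complex.exp v - qA) * (Complex.exp v + qA) := by ring
  rw [hfac, norm_mul]
  have h1 : ‖Complex.exp v - qA‖ ≤ 11 / 10 ^ 8 := expv_approx
  have h2 : ‖Complex.exp v + qA‖ ≤ 5 := by
    refine (norm_add_le _ _).trans ?_
    have ha : ‖Complex.exp v‖ ≤ 3 := by
      rw [Complex.norm_exp]
      have hre : v.re = 1 / 6 := by
        rw [hv]; norm_num [Complex.div_re, Complex.normSq_apply]
      rw [hre]
      have := Real.exp_one_lt_d9
      calc Real.exp (1 / 6) ≤ Real.exp 1 := Real.exp_le_exp.2 (by norm_num)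
        _ ≤ 3 := by linarith
    have hb : ‖qA‖ ≤ 2 := by
      apply abs_le_of_sq (by norm_num)
      rw [hqA]
      norm_num [Complex.add_re, Complex.add_im]
    linarith
  calc ‖Complex.exp v - qA‖ * ‖Complex.exp v + qA‖
      ≤ (11 / 10 ^ 8) * 5 := by
        apply mul_le_mul h1 h2 (norm_nonneg _) (by norm_num)
    _ ≤ 1 / 10 ^ 6 := by norm_num

set_option maxHeartbeats 2000000 in
theorem stmt_19 :
    (∃ z : ℂ, 0 < z.im ∧ z.im < Real.pi ∧ Complex.exp z = z) ∧
    (∃! z : ℂ, z.re ∈ Set.Icc (0 : ℝ) 1 ∧ z.im ∈ Set.Icc (1 : ℝ) (3 / 2) ∧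
      Complex.exp z - z = 0) := by
  have pi_gt_3 := Real.pi_gt_three
  set u : ℂ := (1 + 4 * Complex.I) / 3 with hu
  have hure : u.re = 1 / 3 := by rw [hu]; norm_num [Complex.div_re, Complex.normSq_apply]
  have huim : u.im = 4 / 3 := by rw [hu]; norm_num [Complex.div_im, Complex.normSq_apply]
  set qB : ℂ := (301135717076795912429/917257029442999418880 : ℂ) +
      (32401354252818094561/23886901808411443200) * Complex.I with hqB
  have hqBre : qB.re = 301135717076795912429/917257029442999418880 := by
    rw [hqB]; norm_num
  have hqBim : qB.im = 32401354252818094561/23886901808411443200 := by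
    rw [hqB]; norm_num
  set z1 : ℂ := Complex.exp u with hz1
  -- basic numeric facts about z1
  have happrox : ‖z1 - qB‖ ≤ 1 / 10 ^ 6 := expu_approx
  have hz1re : |z1.re - qB.re| ≤ 1 / 10 ^ 6 := by
    have := (Complex.abs_re_le_norm (z1 - qB)).trans happrox
    simpa using this
  have hz1im : |z1.im - qB.im| ≤ 1 / 10 ^ 6 := by
    have := (Complex.abs_im_le_norm (z1 - qB)).trans happrox
    simpa using this
  have hz1re' : 0.328 ≤ z1.re ∧ z1.re ≤ 0.329 := by
    rw [hqBre] at hz1re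
    constructor <;> [nlinarith [abs_le.1 hz1re]; nlinarith [abs_le.1 hz1re]]
  have hz1im' : 1.35644 ≤ z1.im ∧ z1.im ≤ 1.35645 := by
    rw [hqBim] at hz1im
    constructor <;> [nlinarith [abs_le.1 hz1im]; nlinarith [abs_le.1 hz1im]]
  -- distance from u to z1
  have hdelta : ‖u - z1‖ ≤ 0.023661 := by
    have h1 : ‖u - qB‖ ≤ 0.02366 := by
      apply abs_le_of_sq (by norm_num)
      rw [Complex.sub_re, Complex.sub_im, hure, huim, hqBre, hqBim]
      norm_num
    calc ‖u - z1‖ = ‖(u - qB) + (qB - z1)‖ := by ring_nf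
      _ ≤ ‖u - qB‖ + ‖qB - z1‖ := norm_add_le _ _
      _ = ‖u - qB‖ + ‖z1 - qB‖ := by rw [← norm_neg (qB - z1)]; ring_nf
      _ ≤ 0.02366 + 1 / 10 ^ 6 := add_le_add h1 happrox
      _ ≤ 0.023661 := by norm_num
  have hlogz1 : Complex.log z1 = u := by
    rw [hz1]
    exact Complex.log_exp (by rw [huim]; linarith [Real.pi_pos]) (by rw [huim]; linarith)
  -- the closed ball
  set S : Set ℂ := Metric.closedBall z1 0.142 with hS
  have hz1S : z1 ∈ S := Metric.mem_closedBall_self (by norm_num)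
  have hSball : ∀ ζ ∈ S, |ζ.re - z1.re| ≤ 0.142 ∧ |ζ.im - z1.im| ≤ 0.142 := by
    intro ζ hζ
    have hd : ‖ζ - z1‖ ≤ 0.142 := by
      rw [← dist_eq_norm]; exact Metric.mem_closedBall.1 hζ
    exact ⟨by simpa using (Complex.abs_re_le_norm (ζ - z1)).trans hd,
      by simpa using (Complex.abs_im_le_norm (ζ - z1)).trans hd⟩
  have hSim : ∀ ζ ∈ S, (6 : ℝ) / 5 ≤ ζ.im := by
    intro ζ hζ
    have := (hSball ζ hζ).2
    have h := abs_le.1 this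
    linarith [hz1im'.1]
  have hSlip : ∀ z ∈ S, ∀ w ∈ S, ‖Complex.log z - Complex.log w‖ ≤ (5 : ℝ) / 6 * ‖z - w‖ := by
    intro z hz w hw
    have := log_lip (c := 6 / 5) (by norm_num) (convex_closedBall z1 0.142) hSim hz hw
    calc ‖Complex.log z - Complex.log w‖ ≤ ((6 : ℝ) / 5)⁻¹ * ‖z - w‖ := this
      _ = (5 : ℝ) / 6 * ‖z - w‖ := by norm_num
  have hmap : ∀ ζ ∈ S, Complex.log ζ ∈ S := by
    intro ζ hζ
    rw [Metric.mem_closedBall, dist_eq_norm]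
    calc ‖Complex.log ζ - z1‖
        = ‖(Complex.log ζ - Complex.log z1) + (u - z1)‖ := by rw [hlogz1]; ring_nf
      _ ≤ ‖Complex.log ζ - Complex.log z1‖ + ‖u - z1‖ := norm_add_le _ _
      _ ≤ (5 : ℝ) / 6 * ‖ζ - z1‖ + 0.023661 := add_le_add (hSlip ζ hζ z1 hz1S) hdelta
      _ ≤ (5 : ℝ) / 6 * 0.142 + 0.023661 := by
          have : ‖ζ - z1‖ ≤ 0.142 := by rw [← dist_eq_norm]; exact Metric.mem_closedBall.1 hζ
          linarith
      _ ≤ 0.142 := by norm_num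
  -- minimize ‖log ζ - ζ‖ on S
  have hcont : ContinuousOn (fun ζ : ℂ => ‖Complex.log ζ - ζ‖) S := by
    apply ContinuousOn.norm
    apply ContinuousOn.sub _ continuousOn_id
    intro ζ hζ
    have hpos : (0 : ℝ) < ζ.im := by linarith [hSim ζ hζ]
    exact (continuousAt_clog (Or.inr hpos.ne')).continuousWithinAt
  obtain ⟨z0, hz0S, hmin⟩ := (isCompact_closedBall z1 0.142).exists_isMinOn ⟨z1, hz1S⟩ hcont
  have hfix : Complex.log z0 = z0 := by
    have h1 : ‖Complex.log (Complex.log z0) - Complex.log z0‖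
        ≤ (5 : ℝ) / 6 * ‖Complex.log z0 - z0‖ := hSlip _ (hmap z0 hz0S) _ hz0S
    have h2 : ‖Complex.log z0 - z0‖ ≤ ‖Complex.log (Complex.log z0) - Complex.log z0‖ :=
      isMinOn_iff.1 hmin _ (hmap z0 hz0S)
    have h3 : ‖Complex.log z0 - z0‖ ≤ 0 := by linarith
    have h4 : Complex.log z0 - z0 = 0 := by
      have := norm_nonneg (Complex.log z0 - z0)
      exact norm_eq_zero.1 (le_antisymm h3 this)
    exact sub_eq_zero.1 h4
  -- properties of z0
  have hz0re : 0.186 ≤ z0.re ∧ z0.re ≤ 0.471 := by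
    have h := abs_le.1 (hSball z0 hz0S).1
    exact ⟨by linarith [hz1re'.1], by linarith [hz1re'.2]⟩
  have hz0im : 1.214 ≤ z0.im ∧ z0.im ≤ 1.499 := by
    have h := abs_le.1 (hSball z0 hz0S).2
    exact ⟨by linarith [hz1im'.1], by linarith [hz1im'.2]⟩
  have hz0ne : z0 ≠ 0 := by
    intro h
    rw [h] at hz0im
    simp at hz0im
    linarith [hz0im.1]
  have hexpz0 : Complex.exp z0 = z0 := by
    conv_lhs => rw [← hfix]
    exact Complex.exp_log hz0ne
  -- uniqueness preparation: any solution in the rectangle satisfies log z = z and π/3 < im z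
  have key : ∀ z : ℂ, z.re ∈ Set.Icc (0 : ℝ) 1 → z.im ∈ Set.Icc (1 : ℝ) (3 / 2) →
      Complex.exp z - z = 0 → Real.pi / 3 < z.im ∧ Complex.log z = z := by
    intro z hre him hz
    have hexp : Complex.exp z = z := by linear_combination hz
    have hre' : (Complex.exp z).re = z.re := by rw [hexp]
    rw [Complex.exp_re] at hre'
    have hepos : (0 : ℝ) < Real.exp z.re := Real.exp_pos _
    have hxle : z.re ≤ Real.exp (z.re - 1) := by
      have := Real.add_one_le_exp (z.re - 1)
      linarith
    have hcos : Real.cos z.im ≤ Real.exp (-1) := by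
      have hsub : Real.exp (z.re - 1) = Real.exp z.re * Real.exp (-1) := by
        rw [← Real.exp_add]; ring_nf
      rw [hsub] at hxle
      nlinarith
    have hcoslt : Real.cos z.im < 1 / 2 := by
      have h1 := Real.exp_one_gt_d9
      have h2 : Real.exp (-1) = (Real.exp 1)⁻¹ := by
        rw [Real.exp_neg]
      rw [h2] at hcos
      have : (Real.exp 1)⁻¹ < 1 / 2 := by
        rw [inv_lt_comm₀ (Real.exp_pos 1) (by norm_num)]
        linarith
      linarith
    have himgt : Real.pi / 3 < z.im := by
      by_contra h
      push_neg at h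
      have h1 : Real.cos (Real.pi / 3) ≤ Real.cos z.im := by
        apply Real.cos_le_cos_of_nonneg_of_le_pi
        · linarith [him.1]
        · linarith [Real.pi_pos]
        · exact h
      rw [Real.cos_pi_div_three] at h1
      linarith
    refine ⟨himgt, ?_⟩
    have := Complex.log_exp (x := z) (by linarith [him.1, Real.pi_pos]) (by linarith [him.2])
    rw [hexp] at this
    exact this
  have huniq : ∀ y z : ℂ, (y.re ∈ Set.Icc (0 : ℝ) 1 ∧ y.im ∈ Set.Icc (1 : ℝ) (3 / 2) ∧
      Complex.exp y - y = 0) → (z.re ∈ Set.Icc (0 : ℝ) 1 ∧ z.im ∈ Set.Icc (1 : ℝ) (3 / 2) ∧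
      Complex.exp z - z = 0) → y = z := by
    intro y z hy hz
    obtain ⟨hy1, hylog⟩ := key y hy.1 hy.2.1 hy.2.2
    obtain ⟨hz1', hzlog⟩ := key z hz.1 hz.2.1 hz.2.2
    have hconv : Convex ℝ {ζ : ℂ | Real.pi / 3 ≤ ζ.im} := convex_halfSpace_im_ge _
    have hlipyz := log_lip (c := Real.pi / 3) (by positivity) hconv
      (fun ζ hζ => hζ) (Set.mem_setOf.2 hy1.le) (Set.mem_setOf.2 hz1'.le)
    rw [hylog, hzlog] at hlipyz
    have hK : (Real.pi / 3 : ℝ)⁻¹ < 1 := by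
      rw [inv_lt_one₀ (by positivity)]
      linarith
    have hN := norm_nonneg (y - z)
    have : ‖y - z‖ ≤ 0 := by nlinarith
    have h0 : y - z = 0 := norm_eq_zero.1 (le_antisymm this hN)
    exact sub_eq_zero.1 h0
  constructor
  · exact ⟨z0, by linarith [hz0im.1], by linarith [hz0im.2], hexpz0⟩
  · refine ⟨z0, ⟨⟨by linarith [hz0re.1], by linarith [hz0re.2]⟩,
      ⟨by linarith [hz0im.1], by linarith [hz0im.2]⟩, by rw [hexpz0]; ring⟩, ?_⟩
    intro y hy
    exact huniq y z0 hy ⟨⟨by linarith [hz0re.1], by linarith [hz0re.2]⟩,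
      ⟨by linarith [hz0im.1], by linarith [hz0im.2]⟩, by rw [hexpz0]; ring⟩
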